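/- Let T be a contraction on a complex Hilbert space H, let V be a unitary operator on a complex Hilbert space H', and let E be a complex Hilbert space. The unitary dilations of T ⊕ V on (H ⊕ H') ⊕ E are exactly the operators of the form U ⊕ V under the natural identification (H ⊕ H') ⊕ E ≅ (H ⊕ E) ⊕ H', where U is a unitary operator on H ⊕ E whose compression to H is T. In particular, if W is a unitary operator on (H ⊕ H') ⊕ E whose compression to H ⊕ H' equals T ⊕ V, then W(0 ⊕ h' ⊕ 0) = 0 ⊕ V h' ⊕ 0 for all h' ∈ H', the subspace {x ⊕ 0 ⊕ e : x ∈ H, e ∈ E} is invariant under W and W*, and the restriction of W to this subspace is a unitary operator on H ⊕ E whose compression to H is T. -/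

import Mathlib

open scoped InnerProductSpace
open Filter Topology

/-- `U` is a unitary dilation of `T` on the orthogonal direct sum `H ⊕ E`
(realized as `WithLp 2 (H × E)`): `U` is unitary and the compression of `U` to `H` is `T`. -/
def IsUnitaryDilation {H E : Type*} [NormedAddCommGroup H] [InnerProductSpace ℂ H]
    [CompleteSpace H] [NormedAddCommGroup E] [InnerProductSpace ℂ E] [CompleteSpace E]
    (T : H →L[ℂ] H) (U : WithLp 2 (H × E) →L[ℂ] WithLp 2 (H × E)) : Prop :=
  U ∈ unitary (WithLp 2 (H × E) →L[ℂ] WithLp 2 (H × E)) ∧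
    ∀ x : H, T x = (WithLp.equiv 2 (H × E) (U ((WithLp.equiv 2 (H × E)).symm (x, 0)))).1

/-- The direct sum `T ⊕ V` of two operators, acting on the Hilbert space direct sum
`WithLp 2 (H × H')`. -/
noncomputable def prodOp {H H' : Type*} [NormedAddCommGroup H] [InnerProductSpace ℂ H]
    [NormedAddCommGroup H'] [InnerProductSpace ℂ H']
    (T : H →L[ℂ] H) (V : H' →L[ℂ] H') : WithLp 2 (H × H') →L[ℂ] WithLp 2 (H × H') :=
  ((WithLp.prodContinuousLinearEquiv 2 ℂ H H').symm.toContinuousLinearMap).comp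
    ((T.prodMap V).comp (WithLp.prodContinuousLinearEquiv 2 ℂ H H').toContinuousLinearMap)

/-- The element `x ⊕ h' ⊕ e` of `(H ⊕ H') ⊕ E`, realized as
`WithLp 2 (WithLp 2 (H × H') × E)`. -/
noncomputable def mk3 {H H' E : Type*} [NormedAddCommGroup H] [InnerProductSpace ℂ H]
    [NormedAddCommGroup H'] [InnerProductSpace ℂ H']
    [NormedAddCommGroup E] [InnerProductSpace ℂ E]
    (x : H) (h' : H') (e : E) : WithLp 2 (WithLp 2 (H × H') × E) :=
  (WithLp.equiv 2 (WithLp 2 (H × H') × E)).symm ((WithLp.equiv 2 (H × H')).symm (x, h'), e)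

set_option linter.unusedSectionVars false
set_option maxHeartbeats 1000000
set_option synthInstance.maxHeartbeats 1000000

section Aux

variable {H : Type*} [NormedAddCommGroup H] [InnerProductSpace ℂ H] [CompleteSpace H]
    {H' : Type*} [NormedAddCommGroup H'] [InnerProductSpace ℂ H'] [CompleteSpace H']
    {E : Type*} [NormedAddCommGroup E] [InnerProductSpace ℂ E] [CompleteSpace E]

/-- The isometric embedding `H ⊕ E → (H ⊕ H') ⊕ E`. -/
noncomputable def Jm : WithLp 2 (H × E) →L[ℂ] WithLp 2 (WithLp 2 (H × H') × E) :=
  (WithLp.prodContinuousLinearEquiv 2 ℂ (WithLp 2 (H × H')) E).symm.toContinuousLinearMap ∘L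
    ((((WithLp.prodContinuousLinearEquiv 2 ℂ H H').symm.toContinuousLinearMap ∘L
      ContinuousLinearMap.inl ℂ H H').prodMap (ContinuousLinearMap.id ℂ E)) ∘L
      (WithLp.prodContinuousLinearEquiv 2 ℂ H E).toContinuousLinearMap)

/-- The orthogonal projection `(H ⊕ H') ⊕ E → H ⊕ E`. -/
noncomputable def Pm : WithLp 2 (WithLp 2 (H × H') × E) →L[ℂ] WithLp 2 (H × E) :=
  (WithLp.prodContinuousLinearEquiv 2 ℂ H E).symm.toContinuousLinearMap ∘L
    (((ContinuousLinearMap.fst ℂ H H' ∘L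
       (WithLp.prodContinuousLinearEquiv 2 ℂ H H').toContinuousLinearMap).prodMap
       (ContinuousLinearMap.id ℂ E)) ∘L
      (WithLp.prodContinuousLinearEquiv 2 ℂ (WithLp 2 (H × H')) E).toContinuousLinearMap)

/-- The isometric embedding `H' → (H ⊕ H') ⊕ E`. -/
noncomputable def Jm' : H' →L[ℂ] WithLp 2 (WithLp 2 (H × H') × E) :=
  (WithLp.prodContinuousLinearEquiv 2 ℂ (WithLp 2 (H × H')) E).symm.toContinuousLinearMap ∘L
    ContinuousLinearMap.inl ℂ (WithLp 2 (H × H')) E ∘L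
    (WithLp.prodContinuousLinearEquiv 2 ℂ H H').symm.toContinuousLinearMap ∘L
    ContinuousLinearMap.inr ℂ H H'

/-- The orthogonal projection `(H ⊕ H') ⊕ E → H'`. -/
noncomputable def Pm' : WithLp 2 (WithLp 2 (H × H') × E) →L[ℂ] H' :=
  ContinuousLinearMap.snd ℂ H H' ∘L
    (WithLp.prodContinuousLinearEquiv 2 ℂ H H').toContinuousLinearMap ∘L
    ContinuousLinearMap.fst ℂ (WithLp 2 (H × H')) E ∘L
    (WithLp.prodContinuousLinearEquiv 2 ℂ (WithLp 2 (H × H')) E).toContinuousLinearMap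

lemma inner_mk3 (a a' : H) (b b' : H') (c c' : E) :
    ⟪mk3 a b c, mk3 a' b' c'⟫_ℂ = ⟪a, a'⟫_ℂ + ⟪b, b'⟫_ℂ + ⟪c, c'⟫_ℂ := by
  simp [mk3, WithLp.prod_inner_apply]

lemma mk3_add_mk3 (a a' : H) (b b' : H') (c c' : E) :
    mk3 a b c + mk3 a' b' c' = mk3 (a + a') (b + b') (c + c') := rfl

lemma exists_mk3 (k : WithLp 2 (WithLp 2 (H × H') × E)) : ∃ a b c, k = mk3 a b c :=
  ⟨(WithLp.equiv 2 (H × H') ((WithLp.equiv 2 (WithLp 2 (H × H') × E) k).1)).1,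
   (WithLp.equiv 2 (H × H') ((WithLp.equiv 2 (WithLp 2 (H × H') × E) k).1)).2,
   (WithLp.equiv 2 (WithLp 2 (H × H') × E) k).2, rfl⟩

lemma adjoint_Jm : ContinuousLinearMap.adjoint (Jm (H := H) (H' := H') (E := E)) = Pm := by
  symm
  rw [ContinuousLinearMap.eq_adjoint_iff]
  intro k u
  obtain ⟨a, b, c, rfl⟩ := exists_mk3 k
  obtain ⟨x, e, rfl⟩ : ∃ x e, u = (WithLp.equiv 2 (H × E)).symm (x, e) := ⟨_, _, rfl⟩
  show ⟪(WithLp.equiv 2 (H × E)).symm (a, c), (WithLp.equiv 2 (H × E)).symm (x, e)⟫_ℂ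
      = ⟪mk3 a b c, mk3 x 0 e⟫_ℂ
  rw [inner_mk3, WithLp.prod_inner_apply]
  simp

lemma adjoint_Pm : ContinuousLinearMap.adjoint (Pm (H := H) (H' := H') (E := E)) = Jm := by
  rw [← adjoint_Jm, ContinuousLinearMap.adjoint_adjoint]

lemma adjoint_Jm' : ContinuousLinearMap.adjoint (Jm' (H := H) (H' := H') (E := E)) = Pm' := by
  symm
  rw [ContinuousLinearMap.eq_adjoint_iff]
  intro k b'
  obtain ⟨a, b, c, rfl⟩ := exists_mk3 k
  show ⟪b, b'⟫_ℂ = ⟪mk3 a b c, mk3 0 b' 0⟫_ℂ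
  rw [inner_mk3]; simp

lemma adjoint_Pm' : ContinuousLinearMap.adjoint (Pm' (H := H) (H' := H') (E := E)) = Jm' := by
  rw [← adjoint_Jm', ContinuousLinearMap.adjoint_adjoint]

lemma unitary_inner {F : Type*} [NormedAddCommGroup F] [InnerProductSpace ℂ F] [CompleteSpace F]
    {A : F →L[ℂ] F} (hA : A ∈ unitary (F →L[ℂ] F)) (x y : F) : ⟪A x, A y⟫_ℂ = ⟪x, y⟫_ℂ := by
  rw [← ContinuousLinearMap.adjoint_inner_right]
  have h : ContinuousLinearMap.adjoint A (A y) = y := by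
    rw [← ContinuousLinearMap.star_eq_adjoint, ← ContinuousLinearMap.mul_apply,
      (Unitary.mem_iff.mp hA).1, ContinuousLinearMap.one_apply]
  rw [h]

lemma unitary_star_apply {F : Type*} [NormedAddCommGroup F] [InnerProductSpace ℂ F]
    [CompleteSpace F] {A : F →L[ℂ] F} (hA : A ∈ unitary (F →L[ℂ] F)) (x : F) :
    star A (A x) = x := by
  rw [← ContinuousLinearMap.mul_apply, (Unitary.mem_iff.mp hA).1, ContinuousLinearMap.one_apply]

lemma unitary_apply_star {F : Type*} [NormedAddCommGroup F] [InnerProductSpace ℂ F]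
    [CompleteSpace F] {A : F →L[ℂ] F} (hA : A ∈ unitary (F →L[ℂ] F)) (x : F) :
    A (star A x) = x := by
  rw [← ContinuousLinearMap.mul_apply, (Unitary.mem_iff.mp hA).2, ContinuousLinearMap.one_apply]

/-- Application of the operator `U ⊕ V` realized on `(H ⊕ H') ⊕ E`. -/
lemma Wapp (U : WithLp 2 (H × E) →L[ℂ] WithLp 2 (H × E)) (V : H' →L[ℂ] H')
    (a : H) (b : H') (c : E) :
    (Jm (H' := H') ∘L U ∘L Pm (H' := H') + Jm' (H := H) (E := E) ∘L V ∘L Pm' (H := H) (E := E) :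
        WithLp 2 (WithLp 2 (H × H') × E) →L[ℂ] WithLp 2 (WithLp 2 (H × H') × E)) (mk3 a b c)
      = mk3 (WithLp.equiv 2 (H × E) (U ((WithLp.equiv 2 (H × E)).symm (a, c)))).1 (V b)
          (WithLp.equiv 2 (H × E) (U ((WithLp.equiv 2 (H × E)).symm (a, c)))).2 := by
  rw [ContinuousLinearMap.add_apply,
    show (Jm (H' := H') ∘L U ∘L Pm (H' := H')) (mk3 a b c)
      = mk3 (WithLp.equiv 2 (H × E) (U ((WithLp.equiv 2 (H × E)).symm (a, c)))).1 0
          (WithLp.equiv 2 (H × E) (U ((WithLp.equiv 2 (H × E)).symm (a, c)))).2 from rfl,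
    show (Jm' (H := H) (E := E) ∘L V ∘L Pm' (H := H) (E := E)) (mk3 a b c) = mk3 0 (V b) 0 from rfl, mk3_add_mk3]
  simp

/-- The adjoint of `U ⊕ V` is `U* ⊕ V*`. -/
lemma Wstar (U : WithLp 2 (H × E) →L[ℂ] WithLp 2 (H × E)) (V : H' →L[ℂ] H') :
    star (Jm (H' := H') ∘L U ∘L Pm (H' := H') + Jm' (H := H) (E := E) ∘L V ∘L Pm' (H := H) (E := E) :
        WithLp 2 (WithLp 2 (H × H') × E) →L[ℂ] WithLp 2 (WithLp 2 (H × H') × E))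
      = Jm (H' := H') ∘L star U ∘L Pm (H' := H') + Jm' (H := H) (E := E) ∘L star V ∘L Pm' (H := H) (E := E) := by
  refine (star_add (R := WithLp 2 (WithLp 2 (H × H') × E) →L[ℂ] WithLp 2 (WithLp 2 (H × H') × E))
    (Jm (H' := H') ∘L U ∘L Pm (H' := H')) (Jm' (H := H) (E := E) ∘L V ∘L Pm' (H := H) (E := E))).trans ?_
  congr 1
  · rw [ContinuousLinearMap.star_eq_adjoint, ContinuousLinearMap.star_eq_adjoint U,
      ContinuousLinearMap.adjoint_comp, ContinuousLinearMap.adjoint_comp, adjoint_Jm,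
      adjoint_Pm, ContinuousLinearMap.comp_assoc]
  · rw [ContinuousLinearMap.star_eq_adjoint, ContinuousLinearMap.star_eq_adjoint V,
      ContinuousLinearMap.adjoint_comp, ContinuousLinearMap.adjoint_comp, adjoint_Jm',
      adjoint_Pm', ContinuousLinearMap.comp_assoc]

end Aux

/-- The unitary dilations of `T ⊕ V` on `(H ⊕ H') ⊕ E` (`V` unitary)
are exactly the operators `U ⊕ V` under the identification
`(H ⊕ H') ⊕ E ≅ (H ⊕ E) ⊕ H'`, where `U` is a unitary dilation of `T` on `H ⊕ E`.
In particular every unitary dilation `W` of `T ⊕ V` fixes the summand `H'` (acting on it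
as `V`), leaves the subspace `H ⊕ E` invariant together with its adjoint, and restricts
on it to a unitary dilation `U` of `T`. -/
theorem unitary_dilations_of_prod_unitary
    {H : Type*} [NormedAddCommGroup H] [InnerProductSpace ℂ H] [CompleteSpace H]
    {H' : Type*} [NormedAddCommGroup H'] [InnerProductSpace ℂ H'] [CompleteSpace H']
    {E : Type*} [NormedAddCommGroup E] [InnerProductSpace ℂ E] [CompleteSpace E]
    (T : H →L[ℂ] H) (hT : ‖T‖ ≤ 1)
    (V : H' →L[ℂ] H') (hV : V ∈ unitary (H' →L[ℂ] H')) :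
    (∀ W : WithLp 2 (WithLp 2 (H × H') × E) →L[ℂ] WithLp 2 (WithLp 2 (H × H') × E),
      IsUnitaryDilation (prodOp T V) W →
        (∀ h' : H', W (mk3 0 h' 0) = mk3 0 (V h') 0) ∧
        (∀ (x : H) (e : E), ∃ (x' : H) (e' : E), W (mk3 x 0 e) = mk3 x' 0 e') ∧
        (∀ (x : H) (e : E), ∃ (x' : H) (e' : E), (star W) (mk3 x 0 e) = mk3 x' 0 e') ∧
        (∃ U : WithLp 2 (H × E) →L[ℂ] WithLp 2 (H × E),
          IsUnitaryDilation T U ∧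
          ∀ (x : H) (e : E),
            let u := WithLp.equiv 2 (H × E) (U ((WithLp.equiv 2 (H × E)).symm (x, e)))
            W (mk3 x 0 e) = mk3 u.1 0 u.2)) ∧
    (∀ U : WithLp 2 (H × E) →L[ℂ] WithLp 2 (H × E),
      IsUnitaryDilation T U →
        ∃ W : WithLp 2 (WithLp 2 (H × H') × E) →L[ℂ] WithLp 2 (WithLp 2 (H × H') × E),
          IsUnitaryDilation (prodOp T V) W ∧
          ∀ (x : H) (h' : H') (e : E),
            let u := WithLp.equiv 2 (H × E) (U ((WithLp.equiv 2 (H × E)).symm (x, e)))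
            W (mk3 x h' e) = mk3 u.1 (V h') u.2) := by
  constructor
  · -- forward direction
    intro W hW
    obtain ⟨hWu, hWc⟩ := hW
    -- the compression property, componentwise
    have comp : ∀ (x : H) (h' : H'), ∃ c : E, W (mk3 x h' 0) = mk3 (T x) (V h') c := by
      intro x h'
      obtain ⟨a, b, c, hk⟩ := exists_mk3 (W (mk3 x h' 0))
      refine ⟨c, ?_⟩
      have h := hWc ((WithLp.equiv 2 (H × H')).symm (x, h'))
      rw [show (WithLp.equiv 2 (WithLp 2 (H × H') × E)).symm
          ((WithLp.equiv 2 (H × H')).symm (x, h'), 0) = mk3 x h' 0 from rfl, hk] at h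
      have ha : T x = a := congrArg (fun z => (WithLp.equiv 2 (H × H') z).1) h
      have hb : V h' = b := congrArg (fun z => (WithLp.equiv 2 (H × H') z).2) h
      rw [hk, ← ha, ← hb]
    -- W fixes the H' summand, acting as V on it
    have hfix : ∀ h' : H', W (mk3 0 h' 0) = mk3 0 (V h') 0 := by
      intro h'
      obtain ⟨c, hc⟩ := comp 0 h'
      rw [map_zero] at hc
      have hnorm : ⟪W (mk3 (0:H) h' (0:E)), W (mk3 (0:H) h' (0:E))⟫_ℂ
          = ⟪mk3 (0:H) h' (0:E), mk3 (0:H) h' (0:E)⟫_ℂ := unitary_inner hWu _ _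
      rw [hc, inner_mk3, inner_mk3, unitary_inner hV] at hnorm
      have hc0 : c = 0 := by
        rw [← inner_self_eq_zero (𝕜 := ℂ)]
        simpa using hnorm
      rw [hc0] at hc
      exact hc
    have hstarW : ∀ z, star W (W z) = z := unitary_star_apply hWu
    have hWstar : ∀ z, W (star W z) = z := unitary_apply_star hWu
    -- the adjoint of W also fixes the H' summand
    have hfixstar : ∀ h' : H', star W (mk3 0 h' 0) = mk3 0 (star V h') 0 := by
      intro h'
      rw [show mk3 (0:H) h' (0:E) = mk3 0 (V (star V h')) 0 by rw [unitary_apply_star hV],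
        ← hfix, hstarW]
    -- invariance of the H ⊕ E summand under W
    have hinv : ∀ (x : H) (e : E), ∃ (a : H) (c : E), W (mk3 x 0 e) = mk3 a 0 c := by
      intro x e
      obtain ⟨a, b, c, hk⟩ := exists_mk3 (W (mk3 x 0 e))
      have hb : b = 0 := by
        rw [← inner_self_eq_zero (𝕜 := ℂ)]
        have h1 : ⟪W (mk3 x (0:H') e), mk3 (0:H) b (0:E)⟫_ℂ
            = ⟪mk3 x (0:H') e, star W (mk3 (0:H) b (0:E))⟫_ℂ := by
          rw [ContinuousLinearMap.star_eq_adjoint, ContinuousLinearMap.adjoint_inner_right]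
        rw [hk, inner_mk3, hfixstar, inner_mk3] at h1
        simpa using h1
      exact ⟨a, c, by rw [hk, hb]⟩
    -- invariance of the H ⊕ E summand under W*
    have hinvstar : ∀ (x : H) (e : E), ∃ (a : H) (c : E), star W (mk3 x 0 e) = mk3 a 0 c := by
      intro x e
      obtain ⟨a, b, c, hk⟩ := exists_mk3 (star W (mk3 x 0 e))
      have hb : b = 0 := by
        rw [← inner_self_eq_zero (𝕜 := ℂ)]
        have h1 : ⟪star W (mk3 x (0:H') e), mk3 (0:H) b (0:E)⟫_ℂ
            = ⟪mk3 x (0:H') e, W (mk3 (0:H) b (0:E))⟫_ℂ := by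
          rw [ContinuousLinearMap.star_eq_adjoint, ContinuousLinearMap.adjoint_inner_left]
        rw [hk, inner_mk3, hfix, inner_mk3] at h1
        simpa using h1
      exact ⟨a, c, by rw [hk, hb]⟩
    -- key identities for the compression U := Pm ∘L W ∘L Jm
    have hJU : ∀ u : WithLp 2 (H × E), W (Jm u) = Jm (Pm (W (Jm u))) := by
      intro u
      obtain ⟨x, e, rfl⟩ : ∃ x e, u = (WithLp.equiv 2 (H × E)).symm (x, e) := ⟨_, _, rfl⟩
      obtain ⟨a, c, hac⟩ := hinv x e
      show W (mk3 x 0 e) = Jm (Pm (W (mk3 x 0 e)))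
      rw [hac]
      rfl
    have hJUstar : ∀ u : WithLp 2 (H × E), star W (Jm u) = Jm (Pm (star W (Jm u))) := by
      intro u
      obtain ⟨x, e, rfl⟩ : ∃ x e, u = (WithLp.equiv 2 (H × E)).symm (x, e) := ⟨_, _, rfl⟩
      obtain ⟨a, c, hac⟩ := hinvstar x e
      show star W (mk3 x 0 e) = Jm (Pm (star W (mk3 x 0 e)))
      rw [hac]
      rfl
    have hJP : ∀ (u : WithLp 2 (H × E)) (k : WithLp 2 (WithLp 2 (H × H') × E)),
        ⟪Jm u, k⟫_ℂ = ⟪u, Pm k⟫_ℂ := by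
      intro u k
      rw [← adjoint_Jm, ContinuousLinearMap.adjoint_inner_right]
    have hPJ : ∀ (k : WithLp 2 (WithLp 2 (H × H') × E)) (u : WithLp 2 (H × E)),
        ⟪k, Jm u⟫_ℂ = ⟪Pm k, u⟫_ℂ := by
      intro k u
      rw [← adjoint_Jm, ContinuousLinearMap.adjoint_inner_left]
    have hstarU : ∀ z, star (Pm ∘L W ∘L Jm) z = Pm (star W (Jm z)) := by
      intro z
      apply ext_inner_right ℂ
      intro v
      rw [ContinuousLinearMap.star_eq_adjoint, ContinuousLinearMap.adjoint_inner_left,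
        ← hPJ, ContinuousLinearMap.star_eq_adjoint W, ContinuousLinearMap.adjoint_inner_left,
        hJU v, hJP]
      rfl
    have hU1 : star (Pm ∘L W ∘L Jm) * (Pm ∘L W ∘L Jm) = 1 := by
      apply ContinuousLinearMap.ext
      intro z
      rw [ContinuousLinearMap.mul_apply, ContinuousLinearMap.one_apply, hstarU,
        show Jm ((Pm ∘L W ∘L Jm) z) = W (Jm z) from (hJU z).symm, hstarW]
      rfl
    have hU2 : (Pm ∘L W ∘L Jm) * star (Pm ∘L W ∘L Jm) = 1 := by
      apply ContinuousLinearMap.ext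
      intro z
      rw [ContinuousLinearMap.mul_apply, ContinuousLinearMap.one_apply, hstarU]
      show Pm (W (Jm (Pm (star W (Jm z))))) = z
      rw [← hJUstar, hWstar]
      rfl
    refine ⟨hfix, hinv, hinvstar, Pm ∘L W ∘L Jm, ⟨Unitary.mem_iff.mpr ⟨hU1, hU2⟩, ?_⟩, ?_⟩
    · -- the compression of U is T
      intro x
      obtain ⟨c, hc⟩ := comp x 0
      rw [map_zero] at hc
      show T x = (WithLp.equiv 2 (H × E) (Pm (W (mk3 x 0 0)))).1
      rw [hc]
      rfl
    · -- the invariance formula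
      intro x e
      exact hJU ((WithLp.equiv 2 (H × E)).symm (x, e))
  · -- converse direction
    intro U hU
    obtain ⟨hUu, hUc⟩ := hU
    refine ⟨Jm (H' := H') ∘L U ∘L Pm (H' := H') + Jm' (H := H) (E := E) ∘L V ∘L Pm' (H := H) (E := E), ⟨Unitary.mem_iff.mpr ⟨?_, ?_⟩, ?_⟩, ?_⟩
    · -- star W * W = 1
      apply ContinuousLinearMap.ext
      intro k
      obtain ⟨a, b, c, rfl⟩ := exists_mk3 k
      rw [ContinuousLinearMap.mul_apply, ContinuousLinearMap.one_apply, Wapp, Wstar, Wapp,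
        show (WithLp.equiv 2 (H × E)).symm
            ((WithLp.equiv 2 (H × E) (U ((WithLp.equiv 2 (H × E)).symm (a, c)))).1,
             (WithLp.equiv 2 (H × E) (U ((WithLp.equiv 2 (H × E)).symm (a, c)))).2)
          = U ((WithLp.equiv 2 (H × E)).symm (a, c)) from rfl,
        unitary_star_apply hUu, unitary_star_apply hV]
      rfl
    · -- W * star W = 1
      apply ContinuousLinearMap.ext
      intro k
      obtain ⟨a, b, c, rfl⟩ := exists_mk3 k
      rw [ContinuousLinearMap.mul_apply, ContinuousLinearMap.one_apply, Wstar, Wapp, Wapp,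
        show (WithLp.equiv 2 (H × E)).symm
            ((WithLp.equiv 2 (H × E) (star U ((WithLp.equiv 2 (H × E)).symm (a, c)))).1,
             (WithLp.equiv 2 (H × E) (star U ((WithLp.equiv 2 (H × E)).symm (a, c)))).2)
          = star U ((WithLp.equiv 2 (H × E)).symm (a, c)) from rfl,
        unitary_apply_star hUu, unitary_apply_star hV]
      rfl
    · -- the compression of W is T ⊕ V
      intro y
      obtain ⟨x, h', rfl⟩ : ∃ x h', y = (WithLp.equiv 2 (H × H')).symm (x, h') := ⟨_, _, rfl⟩
      show (WithLp.equiv 2 (H × H')).symm (T x, V h')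
          = (WithLp.equiv 2 (WithLp 2 (H × H') × E)
              ((Jm (H' := H') ∘L U ∘L Pm (H' := H') + Jm' (H := H) (E := E) ∘L V ∘L Pm' (H := H) (E := E)) (mk3 x h' 0))).1
      rw [Wapp, ← hUc x]
      rfl
    · -- the formula for W
      intro x h' e
      exact Wapp U V x h' e
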